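/- Let E be an elliptic curve over the finite field F_q given by a smooth Weierstrass equation y² + a₁xy + a₃y = x³ + a₂x² + a₄x + a₆, with group of F_q-rational points E(F_q) (identity O the point at infinity). Let r ≥ 2 be an integer and let V_r ⊆ F_q[X,Y] be the F_q-span of the monomials X^i with 2i ≤ r together with the monomials X^iY with 2i + 3 ≤ r (so dim V_r = r). Let P_1, …, P_{r+1} be pairwise distinct affine F_q-points of E, none of which is 2-torsion (2P_j ≠ O for every j), and suppose P_1 + ⋯ + P_{r+1} is 2-torsion in E(F_q). Then for every index j₀ ∈ {1,…,r+1}, the linear evaluation map V_r → F_q^r sending f to the tuple (f(x(P_j), y(P_j)))_{j ≠ j₀} is bijective; in particular, if two elements of V_r agree at the r points P_j, j ≠ j₀, they also agree at P_{j₀}. -/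

import Mathlib

open Polynomial WeierstrassCurve.Affine WeierstrassCurve.Affine.CoordinateRing
open scoped Polynomial.Bivariate nonZeroDivisors

noncomputable section AuxCoord

variable {F : Type} [Field F] {W : WeierstrassCurve.Affine F}

/-- evaluation at a point of the curve, as a ring hom on the coordinate ring -/
def pointEval {x y : F} (h : W.Equation x y) : W.CoordinateRing →+* F :=
  AdjoinRoot.evalEval h

lemma pointEval_mk {x y : F} (h : W.Equation x y) (p : F[X][Y]) :
    pointEval h (CoordinateRing.mk W p) = p.evalEval x y :=
  AdjoinRoot.evalEval_mk h p

lemma pointEval_algebraMap {x y : F} (h : W.Equation x y) (c : F) :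
    pointEval h (algebraMap F _ c) = c := by
  have : algebraMap F W.CoordinateRing c = CoordinateRing.mk W (C (C c)) := rfl
  rw [this, pointEval_mk]; simp

lemma pointEval_XClass {x y x' : F} (h : W.Equation x y) :
    pointEval h (XClass W x') = x - x' := by
  rw [XClass, pointEval_mk]; simp [Polynomial.evalEval]

lemma pointEval_YClass {x y : F} {y' : F[X]} (h : W.Equation x y) :
    pointEval h (YClass W y') = y - y'.eval x := by
  rw [YClass, pointEval_mk]; simp [Polynomial.evalEval]

lemma XYIdeal_le_ker {x y : F} (h : W.Equation x y) :
    XYIdeal W x (C y) ≤ RingHom.ker (pointEval h) := by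
  rw [XYIdeal, Ideal.span_le]
  rintro p (rfl | rfl)
  · simp [RingHom.mem_ker, pointEval_XClass]
  · simp [RingHom.mem_ker, pointEval_YClass]

lemma isMaximal_XYIdeal {x y : F} (h : W.Equation x y) :
    (XYIdeal W x (C y)).IsMaximal := by
  refine Ideal.Quotient.maximal_of_isField _ ?_
  have h' : (W.polynomial.eval (C y)).eval x = 0 := h
  exact (quotientXYIdealEquiv h').toMulEquiv.isField (Field.toIsField F)

lemma ker_pointEval {x y : F} (h : W.Equation x y) :
    RingHom.ker (pointEval h) = XYIdeal W x (C y) :=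
  ((isMaximal_XYIdeal h).eq_of_le (RingHom.ker_ne_top _) (XYIdeal_le_ker h)).symm

lemma coprime_XYIdeal {x₁ y₁ x₂ y₂ : F} (h₁ : W.Equation x₁ y₁) (h₂ : W.Equation x₂ y₂)
    (hne : ¬(x₁ = x₂ ∧ y₁ = y₂)) :
    IsCoprime (XYIdeal W x₁ (C y₁)) (XYIdeal W x₂ (C y₂)) := by
  rw [Ideal.isCoprime_iff_sup_eq]
  by_contra hsup
  have e1 : XYIdeal W x₁ (C y₁) = XYIdeal W x₁ (C y₁) ⊔ XYIdeal W x₂ (C y₂) :=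
    ((isMaximal_XYIdeal h₁).eq_of_le hsup le_sup_left)
  have e2 : XYIdeal W x₂ (C y₂) = XYIdeal W x₁ (C y₁) ⊔ XYIdeal W x₂ (C y₂) :=
    ((isMaximal_XYIdeal h₂).eq_of_le hsup le_sup_right)
  have hMeq : XYIdeal W x₁ (C y₁) = XYIdeal W x₂ (C y₂) := e1.trans e2.symm
  have hX : XClass W x₁ ∈ XYIdeal W x₂ (C y₂) := by
    rw [← hMeq, XYIdeal]; exact Ideal.subset_span (Set.mem_insert _ _)
  have hY : YClass W (C y₁) ∈ XYIdeal W x₂ (C y₂) := by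
    rw [← hMeq, XYIdeal]; exact Ideal.subset_span (Set.mem_insert_of_mem _ rfl)
  rw [← ker_pointEval h₂, RingHom.mem_ker, pointEval_XClass, sub_eq_zero] at hX
  rw [← ker_pointEval h₂, RingHom.mem_ker, pointEval_YClass, eval_C, sub_eq_zero] at hY
  exact hne ⟨hX.symm, hY.symm⟩

lemma mem_XYIdeal_of_eval {x y : F} (a b : F[X]) (hv : a.eval x + b.eval x * y = 0) :
    a • (1 : W.CoordinateRing) + b • CoordinateRing.mk W Y ∈ XYIdeal W x (C y) := by
  obtain ⟨qa, hqa⟩ := @Polynomial.X_sub_C_dvd_sub_C_eval F x _ a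
  obtain ⟨qb, hqb⟩ := @Polynomial.X_sub_C_dvd_sub_C_eval F x _ b
  rw [XYIdeal, Ideal.mem_span_pair]
  refine ⟨CoordinateRing.mk W (C (qa + C y * qb)), CoordinateRing.mk W (C b), ?_⟩
  have key : (qa + C y * qb) * (X - C x) = a + C y * b - C (a.eval x + b.eval x * y) := by
    rw [map_add]
    linear_combination (norm := (simp only [map_mul]; ring_nf)) -hqa - (C y : F[X]) * hqb
  rw [hv, map_zero, sub_zero] at key
  rw [XClass, YClass, CoordinateRing.smul, CoordinateRing.smul, mul_one]
  simp only [← _root_.map_mul, ← _root_.map_add]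
  refine congrArg (CoordinateRing.mk W) ?_
  have key2 := congrArg (C : F[X] →+* F[X][Y]) key
  simp only [map_add, map_mul, map_sub] at key2 ⊢
  linear_combination key2

open Polynomial WeierstrassCurve.Affine WeierstrassCurve.Affine.CoordinateRing
open scoped Polynomial.Bivariate

noncomputable section AuxB
set_option maxHeartbeats 1600000

lemma finset_inf_eq_prod {R : Type*} [CommRing R] {ι : Type*} (M : ι → Ideal R)
    (s : Finset ι) (h : Set.Pairwise ↑s (Function.onFun IsCoprime M)) :
    s.inf M = ∏ i ∈ s, M i := by
  classical
  induction s using Finset.cons_induction with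
  | empty => simp [Ideal.one_eq_top]
  | cons a s ha ih =>
    have hsub : Set.Pairwise ↑s (Function.onFun IsCoprime M) := h.mono (Finset.coe_subset.mpr (Finset.subset_cons _))
    have hcop : IsCoprime (M a) (s.inf M) := by
      rw [ih hsub]
      refine IsCoprime.prod_right fun i hi => h ?_ ?_ ?_
      · simp
      · simp [hi]
      · rintro rfl; exact ha hi
    rw [Finset.inf_cons, Finset.prod_cons, Ideal.inf_eq_mul_of_isCoprime hcop, ih hsub]

variable {F : Type} [Field F] {W : WeierstrassCurve.Affine F}

open scoped Classical in
theorem aux_key {ι : Type} [Fintype ι] (x y : ι → F)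
    (hns : ∀ i, W.Nonsingular (x i) (y i))
    (hinj : ∀ i j, x i = x j → y i = y j → i = j)
    (a b : F[X]) (hab : ¬(a = 0 ∧ b = 0))
    (hdeg : (Algebra.norm F[X] (a • (1 : W.CoordinateRing) + b • CoordinateRing.mk W Y)).natDegree
      ≤ Fintype.card ι)
    (hv : ∀ i, a.eval (x i) + b.eval (x i) * y i = 0) :
    ∑ i, WeierstrassCurve.Affine.Point.some _ _ (hns i) = 0 := by
  classical
  set felt := a • (1 : W.CoordinateRing) + b • CoordinateRing.mk W Y with hfelt
  have hf0 : felt ≠ 0 := fun h => hab (CoordinateRing.smul_basis_eq_zero h)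
  set M : ι → Ideal W.CoordinateRing := fun i => XYIdeal W (x i) (C (y i)) with hM
  have hpair : Pairwise (Function.onFun IsCoprime M) := fun i j hij =>
    coprime_XYIdeal (hns i).1 (hns j).1 (fun ⟨hx, hy⟩ => hij (hinj i j hx hy))
  have hevalker : ∀ i, RingHom.ker (pointEval (hns i).1) = M i := fun i => ker_pointEval _
  -- the ideal generated by felt
  set I : Ideal W.CoordinateRing := Ideal.span {felt} with hI
  have hIle : ∀ i, I ≤ M i := fun i => by
    rw [hI, Ideal.span_le, Set.singleton_subset_iff]
    exact mem_XYIdeal_of_eval a b (hv i)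
  -- quotient evaluation maps
  have hker0 : ∀ i, ∀ c ∈ I, pointEval (hns i).1 c = 0 := fun i c hc => by
    rw [← RingHom.mem_ker, hevalker i]; exact hIle i hc
  let ε : ι → (W.CoordinateRing ⧸ I) →+* F := fun i =>
    Ideal.Quotient.lift I (pointEval (hns i).1) (hker0 i)
  have hε_mk : ∀ i c, ε i (Ideal.Quotient.mk I c) = pointEval (hns i).1 c := fun i c =>
    Ideal.Quotient.lift_mk I _ _
  let Φ : (W.CoordinateRing ⧸ I) →ₗ[F] (ι → F) :=
    { toFun := fun q i => ε i q
      map_add' := fun u v => by funext i; exact (ε i).map_add u v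
      map_smul' := fun c u => by
        obtain ⟨u, rfl⟩ := Ideal.Quotient.mk_surjective u
        funext i
        show ε i (c • Ideal.Quotient.mk I u) = c • ε i (Ideal.Quotient.mk I u)
        have h1 : c • Ideal.Quotient.mk I u = Ideal.Quotient.mk I (c • u) := by
          rw [← Ideal.Quotient.mkₐ_eq_mk F, ← map_smul]
        rw [h1, hε_mk, hε_mk, Algebra.smul_def, map_mul, pointEval_algebraMap, smul_eq_mul] }
  have hΦ_mk : ∀ c i, Φ (Ideal.Quotient.mk I c) i = pointEval (hns i).1 c := fun c i => hε_mk i c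
  -- surjectivity via CRT
  have hΦsurj : Function.Surjective Φ := by
    intro v
    obtain ⟨q, hq⟩ := Ideal.quotientInfToPiQuotient_surj hpair
      (fun i => Ideal.Quotient.mk (M i) (algebraMap F _ (v i)))
    obtain ⟨c, rfl⟩ := Ideal.Quotient.mk_surjective q
    refine ⟨Ideal.Quotient.mk I c, funext fun i => ?_⟩
    have h2 := congrFun hq i
    rw [Ideal.quotientInfToPiQuotient_mk'] at h2
    have hmem : c - algebraMap F _ (v i) ∈ M i :=
      (Ideal.Quotient.mk_eq_mk_iff_sub_mem _ _).mp h2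
    rw [← hevalker i, RingHom.mem_ker, map_sub, pointEval_algebraMap, sub_eq_zero] at hmem
    rw [hΦ_mk, hmem]
  -- finite dimensionality of the quotient
  have hIbot : I ≠ ⊥ := by simpa [hI, Ideal.span_singleton_eq_bot] using hf0
  haveI : FiniteDimensional F (W.CoordinateRing ⧸ I) := by
    haveI : ∀ i, FiniteDimensional F
        (F[X] ⧸ Ideal.span {I.smithCoeffs (CoordinateRing.basis W) hIbot i}) := fun i =>
      PowerBasis.finite (AdjoinRoot.powerBasis (I.smithCoeffs_ne_zero (CoordinateRing.basis W) hIbot i))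
    exact Module.Finite.equiv
      ((I.quotientEquivPiSpan (CoordinateRing.basis W) hIbot).restrictScalars F).symm
  -- dimension count
  have hfr : Module.finrank F (W.CoordinateRing ⧸ I) = (Algebra.norm F[X] felt).natDegree :=
    finrank_quotient_span_eq_natDegree_norm (CoordinateRing.basis W) hf0
  have hrpi : Module.finrank F (ι → F) = Fintype.card ι := Module.finrank_pi F
  have hge : Module.finrank F (ι → F) ≤ Module.finrank F (W.CoordinateRing ⧸ I) := by
    have h3 := LinearMap.finrank_range_le Φ
    rwa [LinearMap.range_eq_top.mpr hΦsurj, finrank_top] at h3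
  have hreq : Module.finrank F (W.CoordinateRing ⧸ I) = Module.finrank F (ι → F) :=
    le_antisymm (by rw [hfr, hrpi]; exact hdeg) hge
  have hΦinj : Function.Injective Φ :=
    (LinearMap.injective_iff_surjective_of_finrank_eq_finrank hreq).mpr hΦsurj
  -- I equals the product of the maximal ideals
  have hIinf : I = ⨅ i, M i := by
    refine le_antisymm (le_iInf hIle) fun c hc => ?_
    have h4 : Φ (Ideal.Quotient.mk I c) = 0 := by
      funext i
      have h7 : c ∈ M i := Ideal.mem_iInf.mp hc i
      rw [← hevalker i, RingHom.mem_ker] at h7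
      simp [hΦ_mk, h7]
    have h5 : Ideal.Quotient.mk I c = 0 := hΦinj (by rw [h4, map_zero])
    exact (Ideal.Quotient.eq_zero_iff_mem).mp h5
  have hIprod : I = ∏ i, M i := by
    rw [hIinf, ← Finset.inf_univ_eq_iInf, finset_inf_eq_prod M Finset.univ
      (by rwa [Finset.coe_univ, Set.pairwise_univ])]
  -- class group
  have hcoe : (↑(∏ i, XYIdeal' (hns i)) :
      FractionalIdeal W.CoordinateRing⁰ W.FunctionField) = ↑(∏ i, M i) := by
    have e1 : ((∏ i, XYIdeal' (hns i) : (FractionalIdeal W.CoordinateRing⁰ W.FunctionField)ˣ) :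
        FractionalIdeal W.CoordinateRing⁰ W.FunctionField)
        = ∏ i, ((XYIdeal' (hns i) : (FractionalIdeal W.CoordinateRing⁰ W.FunctionField)ˣ) :
          FractionalIdeal W.CoordinateRing⁰ W.FunctionField) :=
      map_prod (Units.coeHom (FractionalIdeal W.CoordinateRing⁰ W.FunctionField)) _ _
    have e2 : (↑(∏ i, M i) : FractionalIdeal W.CoordinateRing⁰ W.FunctionField)
        = ∏ i, (↑(M i) : FractionalIdeal W.CoordinateRing⁰ W.FunctionField) :=
      map_prod (FractionalIdeal.coeIdealHom _ _) _ _
    rw [e1, e2]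
    exact Finset.prod_congr rfl fun i _ => XYIdeal'_eq (hns i)
  have hcls : (∏ i, ClassGroup.mk W.FunctionField (XYIdeal' (hns i))) = 1 := by
    rw [← map_prod]
    exact (ClassGroup.mk_eq_one_of_coe_ideal hcoe).mpr ⟨felt, hf0, hIprod.symm⟩
  have htc : WeierstrassCurve.Affine.Point.toClass
      (∑ i, WeierstrassCurve.Affine.Point.some _ _ (hns i)) = 0 := by
    rw [map_sum]
    have h6 : (∑ i, Additive.ofMul (ClassGroup.mk W.FunctionField (XYIdeal' (hns i))))
        = Additive.ofMul (∏ i, ClassGroup.mk W.FunctionField (XYIdeal' (hns i))) :=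
      (ofMul_prod Finset.univ (fun i => ClassGroup.mk W.FunctionField (XYIdeal' (hns i)))).symm
    have h7 : (∑ i, WeierstrassCurve.Affine.Point.toClass
        (WeierstrassCurve.Affine.Point.some _ _ (hns i)))
        = (∑ i, Additive.ofMul (ClassGroup.mk W.FunctionField (XYIdeal' (hns i)))) :=
      Finset.sum_congr rfl fun i _ => rfl
    rw [h7, h6, hcls]
    rfl
  exact (WeierstrassCurve.Affine.Point.toClass_eq_zero _).mp htc

end AuxB
section AuxMv
variable {F : Type} [Field F]

private def toMv : F[X] →ₐ[F] MvPolynomial (Fin 2) F := Polynomial.aeval (MvPolynomial.X 0)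

private lemma mv_eval_eq_aeval (v : Fin 2 → F) (p : MvPolynomial (Fin 2) F) :
    MvPolynomial.eval v p = MvPolynomial.aeval v p := by
  rw [MvPolynomial.aeval_def, Algebra.algebraMap_self]
  rfl

private lemma eval_toMv (x y : F) (a : F[X]) :
    MvPolynomial.eval ![x, y] (toMv a) = a.eval x := by
  rw [mv_eval_eq_aeval, toMv, ← Polynomial.aeval_algHom_apply, MvPolynomial.aeval_X]
  simp [Polynomial.coe_aeval_eq_eval]

private def psi : F[X] × F[X] →ₗ[F] MvPolynomial (Fin 2) F where
  toFun ab := toMv ab.1 + toMv ab.2 * MvPolynomial.X 1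
  map_add' u v := by simp only [Prod.fst_add, Prod.snd_add, map_add, add_mul]; ring
  map_smul' c u := by
    simp only [Prod.smul_fst, Prod.smul_snd, map_smul, RingHom.id_apply, smul_add,
      smul_mul_assoc]

private lemma psi_apply (a b : F[X]) :
    psi (a, b) = toMv a + toMv b * MvPolynomial.X 1 := rfl

private lemma psi_zero {a b : F[X]} (h : psi (a, b) = 0) : a = 0 ∧ b = 0 := by
  have hθ := congrArg (MvPolynomial.aeval (R := F)
    ![Polynomial.C Polynomial.X, (Polynomial.X : F[X][Y])]) h
  rw [map_zero] at hθ
  have h1 : (Polynomial.C a + Polynomial.C b * Polynomial.X : F[X][Y]) = 0 := by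
    rw [← hθ, psi_apply]
    rw [map_add, map_mul, MvPolynomial.aeval_X, toMv, ← Polynomial.aeval_algHom_apply,
      ← Polynomial.aeval_algHom_apply, MvPolynomial.aeval_X]
    have hC : ∀ p : F[X], Polynomial.aeval (![Polynomial.C Polynomial.X,
        (Polynomial.X : F[X][Y])] 0) p = Polynomial.C p := by
      intro p
      have : (![Polynomial.C Polynomial.X, (Polynomial.X : F[X][Y])] 0)
          = Polynomial.CAlgHom (R := F) Polynomial.X := rfl
      rw [this, Polynomial.aeval_algHom_apply, Polynomial.aeval_X_left_apply]
      rfl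
    rw [hC, hC]
    simp [Matrix.cons_val_one]
  constructor
  · have := congrArg (fun p => Polynomial.coeff p 0) h1
    simpa using this
  · have := congrArg (fun p => Polynomial.coeff p 1) h1
    simpa using this

private lemma psi_injective : Function.Injective (psi (F := F)) := by
  rw [← LinearMap.ker_eq_bot]
  rw [LinearMap.ker_eq_bot']
  rintro ⟨a, b⟩ h
  obtain ⟨ha, hb⟩ := psi_zero h
  simp [ha, hb, Prod.ext_iff]

private lemma eval_psi (x y : F) (a b : F[X]) :
    MvPolynomial.eval ![x, y] (psi (a, b)) = a.eval x + b.eval x * y := by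
  show MvPolynomial.eval ![x, y] (toMv a + toMv b * MvPolynomial.X 1) = _
  rw [map_add, map_mul, eval_toMv, eval_toMv, MvPolynomial.eval_X]
  simp [Matrix.cons_val_one]

variable (F) in
private def psi2 (r : ℕ) : (Polynomial.degreeLT F (r/2 + 1) × Polynomial.degreeLT F ((r-1)/2))
    →ₗ[F] MvPolynomial (Fin 2) F :=
  psi ∘ₗ ((Polynomial.degreeLT F (r/2 + 1)).subtype.prodMap
      ((Polynomial.degreeLT F ((r-1)/2)).subtype))

private lemma psi2_apply (r : ℕ) (u) : psi2 F r u = psi ((u.1 : F[X]), (u.2 : F[X])) := rfl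

private lemma psi2_injective (r : ℕ) : Function.Injective (psi2 F r) := by
  intro u v h
  rw [psi2_apply, psi2_apply] at h
  have := psi_injective h
  rw [Prod.ext_iff] at this
  rw [Prod.ext_iff]
  exact ⟨Subtype.ext this.1, Subtype.ext this.2⟩

private lemma span_eq_range (r : ℕ) (hr : 2 ≤ r) :
    Submodule.span F
        ({p : MvPolynomial (Fin 2) F | ∃ i : ℕ, 2 * i ≤ r ∧
            p = MvPolynomial.X 0 ^ i} ∪
         {p : MvPolynomial (Fin 2) F | ∃ i : ℕ, 2 * i + 3 ≤ r ∧
            p = MvPolynomial.X 0 ^ i * MvPolynomial.X 1}) = LinearMap.range (psi2 F r) := by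
  classical
  apply le_antisymm
  · rw [Submodule.span_le]
    rintro p (⟨i, hi, rfl⟩ | ⟨i, hi, rfl⟩)
    · have hmem : (Polynomial.X : F[X]) ^ i ∈ Polynomial.degreeLT F (r/2 + 1) := by
        rw [Polynomial.mem_degreeLT, Polynomial.degree_X_pow]
        exact_mod_cast Nat.lt_succ_of_le (by omega)
      refine ⟨(⟨Polynomial.X ^ i, hmem⟩, 0), ?_⟩
      rw [psi2_apply]
      simp [psi_apply, toMv, Polynomial.aeval_X_pow]
    · have hmem : (Polynomial.X : F[X]) ^ i ∈ Polynomial.degreeLT F ((r-1)/2) := by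
        rw [Polynomial.mem_degreeLT, Polynomial.degree_X_pow]
        exact_mod_cast (by omega : i < (r-1)/2)
      refine ⟨(0, ⟨Polynomial.X ^ i, hmem⟩), ?_⟩
      rw [psi2_apply]
      simp [psi_apply, toMv, Polynomial.aeval_X_pow]
  · rintro p ⟨⟨⟨a, ha⟩, ⟨b, hb⟩⟩, rfl⟩
    rw [psi2_apply, psi_apply]
    apply Submodule.add_mem
    · have h1 : toMv a ∈ Submodule.map (toMv (F := F)).toLinearMap
          (Polynomial.degreeLT F (r/2 + 1)) := ⟨a, ha, rfl⟩
      refine Submodule.map_le_iff_le_comap.mpr ?_ h1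
      rw [Polynomial.degreeLT_eq_span_X_pow, Submodule.span_le]
      rintro q hq
      simp only [Finset.coe_image, Finset.coe_range, Set.mem_image, Set.mem_Iio] at hq
      obtain ⟨i, hi, rfl⟩ := hq
      refine Submodule.mem_comap.mpr (Submodule.subset_span (Or.inl ⟨i, by omega, ?_⟩))
      simp [toMv, Polynomial.aeval_X_pow]
    · have h1 : toMv b * MvPolynomial.X 1 ∈ Submodule.map
          ((LinearMap.mulRight F (MvPolynomial.X 1)).comp (toMv (F := F)).toLinearMap)
          (Polynomial.degreeLT F ((r-1)/2)) := ⟨b, hb, rfl⟩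
      refine Submodule.map_le_iff_le_comap.mpr ?_ h1
      rw [Polynomial.degreeLT_eq_span_X_pow, Submodule.span_le]
      rintro q hq
      simp only [Finset.coe_image, Finset.coe_range, Set.mem_image, Set.mem_Iio] at hq
      obtain ⟨i, hi, rfl⟩ := hq
      refine Submodule.mem_comap.mpr (Submodule.subset_span (Or.inr ⟨i, by omega, ?_⟩))
      simp [toMv, LinearMap.mulRight_apply, Polynomial.aeval_X_pow]

private lemma finrank_span_eq (r : ℕ) (hr : 2 ≤ r) :
    Module.finrank F ↥(Submodule.span F
        ({p : MvPolynomial (Fin 2) F | ∃ i : ℕ, 2 * i ≤ r ∧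
            p = MvPolynomial.X 0 ^ i} ∪
         {p : MvPolynomial (Fin 2) F | ∃ i : ℕ, 2 * i + 3 ≤ r ∧
            p = MvPolynomial.X 0 ^ i * MvPolynomial.X 1})) = r := by
  rw [span_eq_range r hr]
  haveI h1 : FiniteDimensional F (Polynomial.degreeLT F (r/2 + 1)) :=
    Module.Finite.equiv (Polynomial.degreeLTEquiv F (r/2 + 1)).symm
  haveI h2 : FiniteDimensional F (Polynomial.degreeLT F ((r-1)/2)) :=
    Module.Finite.equiv (Polynomial.degreeLTEquiv F ((r-1)/2)).symm
  rw [← (LinearEquiv.ofInjective (psi2 F r) (psi2_injective r)).finrank_eq]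
  rw [Module.finrank_prod]
  rw [(Polynomial.degreeLTEquiv F (r/2 + 1)).finrank_eq,
    (Polynomial.degreeLTEquiv F ((r-1)/2)).finrank_eq,
    Module.finrank_fin_fun, Module.finrank_fin_fun]
  omega

end AuxMv


set_option maxHeartbeats 1600000 in
open scoped Classical in
/-- let `E` be an elliptic curve over `F_q` given by a smooth Weierstrass
equation, let `V_r ⊆ F_q[X,Y]` be the span of the monomials `X^i` with `2i ≤ r` and
`X^i·Y` with `2i + 3 ≤ r` (the functions of `L(E, rO)`), and let `P_1, …, P_{r+1}` be
pairwise distinct affine rational points of `E`, none of them 2-torsion, whose sum is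
2-torsion.  Then for every `j₀` the evaluation map `V_r → F_q^r` at the points `P_j`,
`j ≠ j₀`, is bijective; in particular two elements of `V_r` agreeing at the `P_j`,
`j ≠ j₀`, also agree at `P_{j₀}`. -/
theorem stmt_16 (F : Type) [Field F] [Fintype F]
    (W : WeierstrassCurve F) (hW : W.Δ ≠ 0)
    (r : ℕ) (hr : 2 ≤ r)
    (P : Fin (r + 1) → F × F) (hPinj : Function.Injective P)
    (hns : ∀ j, W.toAffine.Nonsingular (P j).1 (P j).2)
    -- no P_j is 2-torsion
    (h2 : ∀ j, 2 • (WeierstrassCurve.Affine.Point.some _ _ (hns j)) ≠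
      (0 : W.toAffine.Point))
    -- P_1 + ⋯ + P_{r+1} is 2-torsion
    (hsum : 2 • (∑ j, WeierstrassCurve.Affine.Point.some _ _ (hns j)) =
      (0 : W.toAffine.Point)) :
    ∀ j₀ : Fin (r + 1),
      Function.Bijective
        (fun f : (Submodule.span F
            ({p : MvPolynomial (Fin 2) F | ∃ i : ℕ, 2 * i ≤ r ∧
                p = MvPolynomial.X 0 ^ i} ∪
             {p : MvPolynomial (Fin 2) F | ∃ i : ℕ, 2 * i + 3 ≤ r ∧
                p = MvPolynomial.X 0 ^ i * MvPolynomial.X 1})) =>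
          fun j : {j : Fin (r + 1) // j ≠ j₀} =>
            MvPolynomial.eval ![(P j).1, (P j).2] (f : MvPolynomial (Fin 2) F)) ∧
      ∀ f g : MvPolynomial (Fin 2) F,
        f ∈ Submodule.span F
            ({p : MvPolynomial (Fin 2) F | ∃ i : ℕ, 2 * i ≤ r ∧
                p = MvPolynomial.X 0 ^ i} ∪
             {p : MvPolynomial (Fin 2) F | ∃ i : ℕ, 2 * i + 3 ≤ r ∧
                p = MvPolynomial.X 0 ^ i * MvPolynomial.X 1}) →
        g ∈ Submodule.span F
            ({p : MvPolynomial (Fin 2) F | ∃ i : ℕ, 2 * i ≤ r ∧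
                p = MvPolynomial.X 0 ^ i} ∪
             {p : MvPolynomial (Fin 2) F | ∃ i : ℕ, 2 * i + 3 ≤ r ∧
                p = MvPolynomial.X 0 ^ i * MvPolynomial.X 1}) →
        (∀ j : Fin (r + 1), j ≠ j₀ →
          MvPolynomial.eval ![(P j).1, (P j).2] f
            = MvPolynomial.eval ![(P j).1, (P j).2] g) →
        MvPolynomial.eval ![(P j₀).1, (P j₀).2] f
          = MvPolynomial.eval ![(P j₀).1, (P j₀).2] g := by
  intro j₀
  classical
  set V : Submodule F (MvPolynomial (Fin 2) F) := Submodule.span F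
      ({p : MvPolynomial (Fin 2) F | ∃ i : ℕ, 2 * i ≤ r ∧
          p = MvPolynomial.X 0 ^ i} ∪
       {p : MvPolynomial (Fin 2) F | ∃ i : ℕ, 2 * i + 3 ≤ r ∧
          p = MvPolynomial.X 0 ^ i * MvPolynomial.X 1}) with hV
  let EV : V →ₗ[F] ({j : Fin (r + 1) // j ≠ j₀} → F) :=
    { toFun := fun f j => MvPolynomial.eval ![(P j).1, (P j).2] (f : MvPolynomial (Fin 2) F)
      map_add' := fun u v => by
        funext j
        simp [Submodule.coe_add]
      map_smul' := fun c u => by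
        funext j
        simp [Submodule.coe_smul, MvPolynomial.smul_eval] }
  have hcard : Fintype.card {j : Fin (r + 1) // j ≠ j₀} = r := by
    simp only [ne_eq]
    rw [Fintype.card_subtype_compl, Fintype.card_subtype_eq, Fintype.card_fin]
    omega
  have hVeq : V = LinearMap.range (psi2 F r) := span_eq_range r hr
  -- injectivity
  have hinjEV : Function.Injective EV := by
    rw [injective_iff_map_eq_zero]
    intro u hu
    have humem : (u : MvPolynomial (Fin 2) F) ∈ LinearMap.range (psi2 F r) := by
      rw [← hVeq]; exact u.2
    obtain ⟨⟨⟨a, ha⟩, ⟨b, hb⟩⟩, hu2⟩ := humem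
    rw [psi2_apply] at hu2
    by_contra hne
    have hcne : ¬(a = 0 ∧ b = 0) := by
      rintro ⟨rfl, rfl⟩
      apply hne
      apply Subtype.ext
      rw [show ((0 : V) : MvPolynomial (Fin 2) F) = 0 from rfl, ← hu2, psi_apply]
      simp
    have hv : ∀ j : {j : Fin (r + 1) // j ≠ j₀},
        a.eval (P j).1 + b.eval (P j).1 * (P j).2 = 0 := by
      intro j
      have h3 : EV u j = 0 := by rw [hu]; rfl
      rw [show EV u j = MvPolynomial.eval ![(P j).1, (P j).2] (u : MvPolynomial (Fin 2) F)
        from rfl, ← hu2, eval_psi] at h3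
      exact h3
    have hda : 2 • a.degree ≤ (r : WithBot ℕ) := by
      rcases eq_or_ne a 0 with rfl | ha0
      · rw [Polynomial.degree_zero, two_nsmul]
        simp
      · have h1 : a.natDegree < r / 2 + 1 :=
          (Polynomial.natDegree_lt_iff_degree_lt ha0).mpr (Polynomial.mem_degreeLT.mp ha)
        rw [Polynomial.degree_eq_natDegree ha0, two_nsmul, ← Nat.cast_add]
        exact_mod_cast (by omega : a.natDegree + a.natDegree ≤ r)
    have hdb : 2 • b.degree + 3 ≤ (r : WithBot ℕ) := by
      rcases eq_or_ne b 0 with rfl | hb0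
      · rw [Polynomial.degree_zero, two_nsmul]
        simp
      · have h1 : b.natDegree < (r - 1) / 2 :=
          (Polynomial.natDegree_lt_iff_degree_lt hb0).mpr (Polynomial.mem_degreeLT.mp hb)
        have h2' : (b.natDegree + 1) * 2 ≤ r - 1 :=
          le_trans (Nat.mul_le_mul_right 2 h1) (Nat.div_mul_le_self _ _)
        have hcast : 2 • b.degree + 3 = ((b.natDegree + b.natDegree + 3 : ℕ) : WithBot ℕ) := by
          rw [Polynomial.degree_eq_natDegree hb0, two_nsmul]
          push_cast
          rfl
        rw [hcast]
        exact_mod_cast (by omega : b.natDegree + b.natDegree + 3 ≤ r)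
    have hdeg : (Algebra.norm F[X]
        (a • (1 : W.toAffine.CoordinateRing) + b • CoordinateRing.mk W.toAffine Y)).natDegree
        ≤ Fintype.card {j : Fin (r + 1) // j ≠ j₀} := by
      rw [hcard]
      apply Polynomial.natDegree_le_iff_degree_le.mpr
      rw [CoordinateRing.degree_norm_smul_basis (W' := W.toAffine) a b]
      exact max_le hda hdb
    have hsum0 := aux_key (W := W.toAffine)
      (fun j : {j : Fin (r + 1) // j ≠ j₀} => (P j).1)
      (fun j => (P j).2) (fun j => hns j)
      (fun i j hxe hye => Subtype.ext (hPinj (Prod.ext hxe hye)))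
      a b hcne hdeg hv
    have hsplit : (∑ j : Fin (r + 1), WeierstrassCurve.Affine.Point.some _ _ (hns j))
        = WeierstrassCurve.Affine.Point.some _ _ (hns j₀)
          + ∑ j : {j : Fin (r + 1) // j ≠ j₀}, WeierstrassCurve.Affine.Point.some _ _ (hns j) := by
      rw [← Finset.add_sum_erase Finset.univ _ (Finset.mem_univ j₀)]
      congr 1
      exact Finset.sum_subtype (Finset.univ.erase j₀)
        (fun j => by simp [Finset.mem_erase]) _
    rw [hsplit, smul_add, hsum0, smul_zero, add_zero] at hsum
    exact h2 j₀ hsum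
  -- surjectivity
  haveI hfd : FiniteDimensional F V := by
    haveI : FiniteDimensional F (Polynomial.degreeLT F (r / 2 + 1)) :=
      Module.Finite.equiv (Polynomial.degreeLTEquiv F (r / 2 + 1)).symm
    haveI : FiniteDimensional F (Polynomial.degreeLT F ((r - 1) / 2)) :=
      Module.Finite.equiv (Polynomial.degreeLTEquiv F ((r - 1) / 2)).symm
    rw [hVeq]
    infer_instance
  have hsurjEV : Function.Surjective EV := by
    refine (LinearMap.injective_iff_surjective_of_finrank_eq_finrank ?_).mp hinjEV
    rw [Module.finrank_pi, hcard]
    rw [hV]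
    exact finrank_span_eq r hr
  refine ⟨⟨hinjEV, hsurjEV⟩, ?_⟩
  intro f g hf hg hagree
  have huv : EV ⟨f, hf⟩ = EV ⟨g, hg⟩ := funext fun j => hagree j j.2
  have := hinjEV huv
  rw [Subtype.ext_iff] at this
  rw [show ((⟨f, hf⟩ : V) : MvPolynomial (Fin 2) F) = f from rfl,
    show ((⟨g, hg⟩ : V) : MvPolynomial (Fin 2) F) = g from rfl] at this
  rw [this]
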